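/- Let Q1, Q2 be quadratic forms on R^3 satisfying the nondegeneracy condition of Theorem 1.1. For any four-dimensional subspace V ⊂ R^5, the set {ξ ∈ R^3 : dim(π_ξ(V)) ≤ 2} is contained in the zero set of a nonzero polynomial of degree at most 2. -/

import Mathlib

open Matrix

/-- The three tangent vectors `n₁(ξ), n₂(ξ), n₃(ξ)` of the surface
`(r,s,t,Q₁(r,s,t),Q₂(r,s,t))` at the point `ξ`, where `Q_i(v) = v ⬝ A_i v`. -/
noncomputable def tangentVec (A₁ A₂ : Matrix (Fin 3) (Fin 3) ℝ) (ξ : Fin 3 → ℝ) :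
    Fin 3 → EuclideanSpace ℝ (Fin 5) :=
  ![(WithLp.toLp 2 ![1, 0, 0, ((2 : ℝ) • A₁.mulVec ξ) 0, ((2 : ℝ) • A₂.mulVec ξ) 0] :
      EuclideanSpace ℝ (Fin 5)),
    WithLp.toLp 2 ![0, 1, 0, ((2 : ℝ) • A₁.mulVec ξ) 1, ((2 : ℝ) • A₂.mulVec ξ) 1],
    WithLp.toLp 2 ![0, 0, 1, ((2 : ℝ) • A₁.mulVec ξ) 2, ((2 : ℝ) • A₂.mulVec ξ) 2]]

/-- The tangent space to the surface `(r,s,t,Q₁,Q₂)` at `ξ`, as a subspace of `ℝ⁵`. -/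
noncomputable def tangentSpace (A₁ A₂ : Matrix (Fin 3) (Fin 3) ℝ) (ξ : Fin 3 → ℝ) :
    Submodule ℝ (EuclideanSpace ℝ (Fin 5)) :=
  Submodule.span ℝ (Set.range (tangentVec A₁ A₂ ξ))

/-- The nondegeneracy condition of Theorem 1.1: for every nonzero `(u,v,w)`, the determinant
of the matrix with rows `∇Q₁(ξ), ∇Q₂(ξ), (u,v,w)` is not the zero polynomial in `ξ`. -/
def NondegCond (A₁ A₂ : Matrix (Fin 3) (Fin 3) ℝ) : Prop :=
  ∀ x : Fin 3 → ℝ, x ≠ 0 →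
    ∃ ξ : Fin 3 → ℝ,
      (Matrix.of ![(2 : ℝ) • A₁.mulVec ξ, (2 : ℝ) • A₂.mulVec ξ, x]).det ≠ 0

open Module

/- ### Auxiliary lemmas -/

lemma coord_sum (g : Fin 3 → ℝ) (v : Fin 3 → EuclideanSpace ℝ (Fin 5)) (j : Fin 5) :
    (∑ i, g i • v i) j = ∑ i, g i * v i j := by
  simp [Fin.sum_univ_three, PiLp.add_apply, PiLp.smul_apply, smul_eq_mul]

lemma tangent_combo (A₁ A₂ : Matrix (Fin 3) (Fin 3) ℝ) (ξ : Fin 3 → ℝ) (c : Fin 3 → ℝ)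
    (k : Fin 5) :
    (∑ i, c i • tangentVec A₁ A₂ ξ i) k =
    (![c 0, c 1, c 2, 2 * (A₁.mulVec ξ ⬝ᵥ c), 2 * (A₂.mulVec ξ ⬝ᵥ c)]) k := by
  fin_cases k <;>
    simp [coord_sum, tangentVec, dotProduct, Fin.sum_univ_three] <;> ring

lemma finrank_tangentSpace (A₁ A₂ : Matrix (Fin 3) (Fin 3) ℝ) (ξ : Fin 3 → ℝ) :
    finrank ℝ ↥(tangentSpace A₁ A₂ ξ) = 3 := by
  have li : LinearIndependent ℝ (tangentVec A₁ A₂ ξ) := by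
    rw [Fintype.linearIndependent_iff]
    intro g hg i
    have h0 : ∀ k : Fin 5,
        (![g 0, g 1, g 2, 2 * (A₁.mulVec ξ ⬝ᵥ g), 2 * (A₂.mulVec ξ ⬝ᵥ g)]) k = 0 := by
      intro k
      rw [← tangent_combo, hg]
      rfl
    fin_cases i
    · simpa using h0 0
    · simpa using h0 1
    · simpa using h0 2
  rw [tangentSpace, finrank_span_eq_card li]
  simp

lemma mem_tangent_of_rank_le {E : Type*} [NormedAddCommGroup E] [InnerProductSpace ℝ E]
    [FiniteDimensional ℝ E] (T V : Submodule ℝ E) (hE : finrank ℝ E = 5)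
    (hV : finrank ℝ ↥V = 4) (hT : finrank ℝ ↥T = 3)
    (h : finrank ℝ ↥(V.map (T.orthogonalProjectionOnto).toLinearMap) ≤ 2)
    {n : E} (hn : n ∈ Vᗮ) : n ∈ T := by
  set f := (T.orthogonalProjectionOnto).toLinearMap with hf
  have hker : LinearMap.ker f = Tᗮ := by
    rw [hf]; exact Submodule.ker_orthogonalProjectionOnto (K := T)
  have hrn : finrank ℝ ↥(LinearMap.range (f.domRestrict V)) +
      finrank ℝ ↥(LinearMap.ker (f.domRestrict V)) = finrank ℝ ↥V :=
    LinearMap.finrank_range_add_finrank_ker _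
  rw [LinearMap.range_domRestrict, LinearMap.ker_domRestrict, hker, hV] at hrn
  have hcomap : finrank ℝ ↥(Submodule.comap V.subtype Tᗮ) = finrank ℝ ↥(V ⊓ Tᗮ) := by
    rw [← Submodule.map_comap_subtype, Submodule.finrank_map_subtype_eq]
  have hTperp : finrank ℝ ↥Tᗮ = 2 := by
    have := Submodule.finrank_add_finrank_orthogonal T
    omega
  have hineq : finrank ℝ ↥Tᗮ ≤ finrank ℝ ↥(V ⊓ Tᗮ) := by omega
  have heq : V ⊓ Tᗮ = Tᗮ := Submodule.eq_of_le_of_finrank_le inf_le_right hineq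
  have hle : Tᗮ ≤ V := heq ▸ inf_le_left
  have h2 : Vᗮ ≤ Tᗮᗮ := Submodule.orthogonal_le hle
  rw [Submodule.orthogonal_orthogonal] at h2
  exact h2 hn

lemma sym_dot (A : Matrix (Fin 3) (Fin 3) ℝ) (hA : A.IsSymm) (ξ x : Fin 3 → ℝ) :
    A.mulVec ξ ⬝ᵥ x = A.mulVec x ⬝ᵥ ξ := by
  simp only [Matrix.mulVec, dotProduct, Finset.sum_mul]
  rw [Finset.sum_comm]
  refine Finset.sum_congr rfl fun i _ => Finset.sum_congr rfl fun j _ => ?_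
  rw [hA.apply]
  ring

/-- The affine-linear polynomial `ξ ↦ 2 b ⬝ ξ - d`. -/
noncomputable def linPoly (b : Fin 3 → ℝ) (d : ℝ) : MvPolynomial (Fin 3) ℝ :=
  (∑ j, MvPolynomial.C (2 * b j) * MvPolynomial.X j) - MvPolynomial.C d

lemma eval_linPoly (b : Fin 3 → ℝ) (d : ℝ) (ξ : Fin 3 → ℝ) :
    MvPolynomial.eval ξ (linPoly b d) = 2 * (b ⬝ᵥ ξ) - d := by
  simp [linPoly, dotProduct, Finset.mul_sum, mul_assoc]

lemma totalDegree_linPoly (b : Fin 3 → ℝ) (d : ℝ) : (linPoly b d).totalDegree ≤ 1 := by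
  rw [linPoly, sub_eq_add_neg, ← map_neg]
  refine le_trans (MvPolynomial.totalDegree_add _ _) (max_le ?_ (by simp))
  refine le_trans (MvPolynomial.totalDegree_finset_sum _ _) (Finset.sup_le fun j _ => ?_)
  refine le_trans (MvPolynomial.totalDegree_mul _ _) ?_
  rw [MvPolynomial.totalDegree_C, MvPolynomial.totalDegree_X]

/-- For a four-dimensional subspace `V ⊂ ℝ⁵`, the set of points `ξ` where the orthogonal
projection of `V` onto the tangent space of the surface at `ξ` has dimension at most 2 is
contained in the zero set of a nonzero polynomial of degree at most 2. -/
theorem stmt14 (A₁ A₂ : Matrix (Fin 3) (Fin 3) ℝ) (hA₁ : A₁.IsSymm) (hA₂ : A₂.IsSymm)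
    (hnd : NondegCond A₁ A₂)
    (V : Submodule ℝ (EuclideanSpace ℝ (Fin 5))) (hV : Module.finrank ℝ V = 4) :
    ∃ p : MvPolynomial (Fin 3) ℝ, p ≠ 0 ∧ p.totalDegree ≤ 2 ∧
      ∀ ξ : Fin 3 → ℝ,
        Module.finrank ℝ
            (V.map ((tangentSpace A₁ A₂ ξ).orthogonalProjectionOnto).toLinearMap) ≤ 2 →
          MvPolynomial.eval ξ p = 0 := by
  have hE : finrank ℝ (EuclideanSpace ℝ (Fin 5)) = 5 := by simp
  -- pick a nonzero normal vector `n` of `V`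
  have hVperp : finrank ℝ ↥Vᗮ = 1 := by
    have := Submodule.finrank_add_finrank_orthogonal V
    omega
  have hne : Vᗮ ≠ ⊥ := by
    intro hbot
    rw [hbot, finrank_bot] at hVperp
    exact one_ne_zero hVperp.symm
  obtain ⟨n, hnV, hn0⟩ := Submodule.ne_bot_iff _ |>.mp hne
  set x : Fin 3 → ℝ := ![n 0, n 1, n 2] with hxdef
  set b₁ : Fin 3 → ℝ := A₁.mulVec x with hb₁
  set b₂ : Fin 3 → ℝ := A₂.mulVec x with hb₂
  set q₁ := linPoly b₁ (n 3) with hq₁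
  set q₂ := linPoly b₂ (n 4) with hq₂
  refine ⟨q₁ * q₁ + q₂ * q₂, ?_, ?_, ?_⟩
  · -- nonzeroness
    intro hp
    have hzero : ∀ ξ : Fin 3 → ℝ, 2 * (b₁ ⬝ᵥ ξ) - n 3 = 0 ∧ 2 * (b₂ ⬝ᵥ ξ) - n 4 = 0 := by
      intro ξ
      have : MvPolynomial.eval ξ (q₁ * q₁ + q₂ * q₂) = 0 := by rw [hp]; simp
      simp only [_root_.map_add, _root_.map_mul, hq₁, hq₂, eval_linPoly] at this
      constructor <;> nlinarith [sq_nonneg (2 * (b₁ ⬝ᵥ ξ) - n 3), sq_nonneg (2 * (b₂ ⬝ᵥ ξ) - n 4)]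
    have hn3 : n 3 = 0 := by have := (hzero 0).1; simpa using this
    have hn4 : n 4 = 0 := by have := (hzero 0).2; simpa using this
    have hb₁0 : b₁ = 0 := by
      have := (hzero b₁).1
      rw [hn3] at this
      have : b₁ ⬝ᵥ b₁ = 0 := by linarith
      exact dotProduct_self_eq_zero.mp this
    have hb₂0 : b₂ = 0 := by
      have := (hzero b₂).2
      rw [hn4] at this
      have : b₂ ⬝ᵥ b₂ = 0 := by linarith
      exact dotProduct_self_eq_zero.mp this
    -- x ≠ 0
    have hx : x ≠ 0 := by
      intro hx0
      apply hn0
      ext k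
      have h0 : n 0 = 0 := by have := congrFun hx0 0; simpa [hxdef] using this
      have h1 : n 1 = 0 := by have := congrFun hx0 1; simpa [hxdef] using this
      have h2 : n 2 = 0 := by have := congrFun hx0 2; simpa [hxdef] using this
      fin_cases k <;> [exact h0; exact h1; exact h2; exact hn3; exact hn4]
    -- construct y ≠ 0 orthogonal to x
    obtain ⟨y, hy0, hyx⟩ : ∃ y : Fin 3 → ℝ, y ≠ 0 ∧ y ⬝ᵥ x = 0 := by
      by_cases h01 : x 0 = 0 ∧ x 1 = 0
      · refine ⟨![1, 0, 0], ?_, ?_⟩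
        · intro h
          have := congrFun h 0
          norm_num at this
        · simp [dotProduct, Fin.sum_univ_three, h01.1]
      · refine ⟨![x 1, -(x 0), 0], ?_, ?_⟩
        · intro h
          apply h01
          constructor
          · have := congrFun h 1; simpa using this
          · have := congrFun h 0; simpa using this
        · simp [dotProduct, Fin.sum_univ_three]
          ring
      -- nondegeneracy gives a contradiction
    obtain ⟨ξ, hdet⟩ := hnd y hy0
    apply hx
    refine Matrix.eq_zero_of_mulVec_eq_zero hdet ?_
    have hr1 : ((2 : ℝ) • A₁.mulVec ξ) ⬝ᵥ x = 0 := by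
      have h : A₁.mulVec ξ ⬝ᵥ x = b₁ ⬝ᵥ ξ := by rw [sym_dot A₁ hA₁]
      rw [smul_dotProduct, h, hb₁0]
      simp
    have hr2 : ((2 : ℝ) • A₂.mulVec ξ) ⬝ᵥ x = 0 := by
      have h : A₂.mulVec ξ ⬝ᵥ x = b₂ ⬝ᵥ ξ := by rw [sym_dot A₂ hA₂]
      rw [smul_dotProduct, h, hb₂0]
      simp
    have hM : (Matrix.of ![(2 : ℝ) • A₁.mulVec ξ, (2 : ℝ) • A₂.mulVec ξ, y]).mulVec x =
        ![((2 : ℝ) • A₁.mulVec ξ) ⬝ᵥ x, ((2 : ℝ) • A₂.mulVec ξ) ⬝ᵥ x, y ⬝ᵥ x] := by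
      funext i
      fin_cases i <;> rfl
    rw [hM, hr1, hr2, hyx]
    funext i
    fin_cases i <;> rfl
  · -- degree bound
    have hd1 := totalDegree_linPoly b₁ (n 3)
    have hd2 := totalDegree_linPoly b₂ (n 4)
    refine le_trans (MvPolynomial.totalDegree_add _ _) (max_le ?_ ?_) <;>
      refine le_trans (MvPolynomial.totalDegree_mul _ _) ?_
    · rw [hq₁]; omega
    · rw [hq₂]; omega
  · -- vanishing on the bad set
    intro ξ hrank
    have hnT : n ∈ tangentSpace A₁ A₂ ξ :=
      mem_tangent_of_rank_le _ V hE hV (finrank_tangentSpace A₁ A₂ ξ) hrank hnV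
    rw [tangentSpace, Submodule.mem_span_range_iff_exists_fun] at hnT
    obtain ⟨c, hc⟩ := hnT
    have hcoord : ∀ k : Fin 5,
        (![c 0, c 1, c 2, 2 * (A₁.mulVec ξ ⬝ᵥ c), 2 * (A₂.mulVec ξ ⬝ᵥ c)]) k = n k := by
      intro k
      rw [← tangent_combo, hc]
    have hcx : c = x := by
      funext i
      fin_cases i
      · simpa [hxdef] using hcoord 0
      · simpa [hxdef] using hcoord 1
      · simpa [hxdef] using hcoord 2
    have h3 : 2 * (A₁.mulVec ξ ⬝ᵥ x) = n 3 := by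
      have := hcoord 3
      rw [hcx] at this
      simpa using this
    have h4 : 2 * (A₂.mulVec ξ ⬝ᵥ x) = n 4 := by
      have := hcoord 4
      rw [hcx] at this
      simpa using this
    simp only [_root_.map_add, _root_.map_mul, hq₁, hq₂, eval_linPoly]
    rw [hb₁, hb₂, ← sym_dot A₁ hA₁, ← sym_dot A₂ hA₂, h3, h4]
    ring
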